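/- For every integer λ ≥ 1, the harmonious total chromatic number of the complete multigraph λK_4 equals 3λ + 4. -/

import Mathlib

set_option linter.unusedSectionVars false

/-- A harmonious total colouring of the complete multigraph `λK_n` with `k` colours.
Vertices are `Fin n`; the `lam` parallel edges joining a pair `e` of distinct vertices
are `(e, i)` for `i : Fin lam`.  The colouring is proper on vertices (all vertices are
pairwise adjacent), on edges sharing an endpoint (in particular parallel edges), and on
vertex-edge incidences; moreover the unordered pairs `{cv v, ce e i}` over incident
vertex-edge pairs are pairwise distinct. -/
def IsHarmoniousTotalColoringM (n lam k : ℕ)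
    (cv : Fin n → Fin k) (ce : Sym2 (Fin n) → Fin lam → Fin k) : Prop :=
  (∀ u v : Fin n, u ≠ v → cv u ≠ cv v) ∧
  (∀ (e f : Sym2 (Fin n)) (i j : Fin lam), ¬ e.IsDiag → ¬ f.IsDiag → (e, i) ≠ (f, j) →
    (∃ v, v ∈ e ∧ v ∈ f) → ce e i ≠ ce f j) ∧
  (∀ (v : Fin n) (e : Sym2 (Fin n)) (i : Fin lam), ¬ e.IsDiag → v ∈ e → cv v ≠ ce e i) ∧
  (∀ (v : Fin n) (e : Sym2 (Fin n)) (i : Fin lam) (w : Fin n) (f : Sym2 (Fin n)) (j : Fin lam),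
    ¬ e.IsDiag → ¬ f.IsDiag → v ∈ e → w ∈ f →
    s(cv v, ce e i) = s(cv w, ce f j) → v = w ∧ e = f ∧ i = j)

/-- The harmonious total chromatic number of the complete multigraph `λK_n`. -/
noncomputable def harmoniousTotalChromaticNumberM (n lam : ℕ) : ℕ :=
  sInf {k | ∃ cv ce, IsHarmoniousTotalColoringM n lam k cv ce}


lemma sym2_rep {X : Type*} (e : Sym2 X) : ∃ a b, e = s(a,b) :=
  Sym2.ind (fun a b => ⟨a, b, rfl⟩) e


def mem4 (v a b : Fin 4) : Prop := v = a ∨ v = b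
def seq4 (a b c d : Fin 4) : Prop := (a = c ∧ b = d) ∨ (a = d ∧ b = c)
instance : ∀ v a b, Decidable (mem4 v a b) := fun _ _ _ => by unfold mem4; infer_instance
instance : ∀ a b c d, Decidable (seq4 a b c d) := fun _ _ _ _ => by unfold seq4; infer_instance

theorem mem4_iff (v a b : Fin 4) : mem4 v a b ↔ v ∈ s(a,b) := by
  simp [mem4, Sym2.mem_iff]
theorem seq4_iff (a b c d : Fin 4) : seq4 a b c d ↔ s(a,b) = s(c,d) := by
  simp [seq4, Sym2.eq_iff]

def pA : Fin 6 → Fin 4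
  | 0 => 0 | 1 => 0 | 2 => 0 | 3 => 1 | 4 => 1 | 5 => 2
def pB : Fin 6 → Fin 4
  | 0 => 1 | 1 => 2 | 2 => 3 | 3 => 2 | 4 => 3 | 5 => 3

theorem exists_idx : ∀ p : Sym2 (Fin 4), ¬p.IsDiag → ∃ t : Fin 6, p = s(pA t, pB t) := by
  decide

theorem idx_inj : ∀ t t' : Fin 6, s(pA t, pB t) = s(pA t', pB t') → t = t' := by decide

theorem pAB_ne : ∀ t : Fin 6, pA t ≠ pB t := by decide

set_option maxHeartbeats 4000000 in
set_option synthInstance.maxSize 2000 in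
set_option maxRecDepth 10000 in
theorem case3 : ∀ (t1 t2 t3 : Fin 6) (w1 w2 w3 : Fin 4),
    ¬ mem4 w1 (pA t1) (pB t1) → ¬ mem4 w2 (pA t2) (pB t2) → ¬ mem4 w3 (pA t3) (pB t3) →
    (t1 ≠ t2 ∨ w1 ≠ w2) → (t1 ≠ t3 ∨ w1 ≠ w3) → (t2 ≠ t3 ∨ w2 ≠ w3) →
    (∀ v : Fin 4, mem4 v (pA t1) (pB t1) ∨ mem4 v (pA t2) (pB t2) ∨ mem4 v (pA t3) (pB t3)) →
    (∃ v v' : Fin 4,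
      (mem4 v (pA t1) (pB t1) ∧ mem4 v' (pA t2) (pB t2) ∧ seq4 v w1 v' w2) ∨
      (mem4 v (pA t1) (pB t1) ∧ mem4 v' (pA t3) (pB t3) ∧ seq4 v w1 v' w3) ∨
      (mem4 v (pA t2) (pB t2) ∧ mem4 v' (pA t3) (pB t3) ∧ seq4 v w2 v' w3)) ∨
    (∃ m : Fin 4, mem4 m (pA t1) (pB t1) ∧ mem4 m (pA t2) (pB t2) ∧ mem4 m (pA t3) (pB t3) ∧
      t1 ≠ t2 ∧ t1 ≠ t3 ∧ t2 ≠ t3) := by decide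

section LB
variable {lam k : ℕ} (cv : Fin 4 → Fin k) (ce : Sym2 (Fin 4) → Fin lam → Fin k)

def PS : Finset (Sym2 (Fin 4)) := Finset.univ.filter (fun p => ¬ p.IsDiag)
def Cp (p : Sym2 (Fin 4)) : Finset (Fin k) := Finset.univ.image (fun i => ce p i)
def VC : Finset (Fin k) := Finset.univ.image cv
def Pc (c : Fin k) : Finset (Sym2 (Fin 4)) := PS.filter (fun p => c ∈ Cp ce p)
def PW : Finset (Sym2 (Fin 4) × Fin 4) :=
  (PS ×ˢ Finset.univ).filter (fun q => cv q.2 ∈ Cp ce q.1)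

variable (hlam : 1 ≤ lam) (hk : k ≤ 3*lam+3)
  (h1 : ∀ u v : Fin 4, u ≠ v → cv u ≠ cv v)
  (h2 : ∀ (e f : Sym2 (Fin 4)) (i j : Fin lam), ¬ e.IsDiag → ¬ f.IsDiag → (e, i) ≠ (f, j) →
    (∃ v, v ∈ e ∧ v ∈ f) → ce e i ≠ ce f j)
  (h3 : ∀ (v : Fin 4) (e : Sym2 (Fin 4)) (i : Fin lam), ¬ e.IsDiag → v ∈ e → cv v ≠ ce e i)

include h1 in
lemma hcv : Function.Injective cv := fun u v h => by
  by_contra hne; exact h1 u v hne h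

include h1 in
lemma hk4 : 4 ≤ k := by
  have := Fintype.card_le_of_injective cv (hcv cv h1)
  simpa using this

include h2 in
lemma hCp {p : Sym2 (Fin 4)} (hp : p ∈ PS) : (Cp ce p).card = lam := by
  rw [PS, Finset.mem_filter] at hp
  obtain ⟨a, b, rfl⟩ := sym2_rep p
  rw [Cp, Finset.card_image_of_injective _ ?_, Finset.card_univ, Fintype.card_fin]
  intro i j hij
  by_contra hne
  exact h2 _ _ i j hp.2 hp.2 (by simp [hne]) ⟨a, by simp, by simp⟩ hij

include h3 in
lemma hw_notin {q : Sym2 (Fin 4) × Fin 4} (hq : q ∈ PW cv ce) : ¬ q.2 ∈ q.1 := by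
  rw [PW, Finset.mem_filter] at hq
  obtain ⟨hq1, hc⟩ := hq
  rw [Cp, Finset.mem_image] at hc
  obtain ⟨i, _, hi⟩ := hc
  intro hmem
  have hps : q.1 ∈ PS := (Finset.mem_product.mp hq1).1
  rw [PS, Finset.mem_filter] at hps
  exact h3 q.2 q.1 i hps.2 hmem hi.symm

include h2 in
lemma hdisj {p p' : Sym2 (Fin 4)} (hp : p ∈ PS) (hp' : p' ∈ PS) (hne : p ≠ p')
    {c : Fin k} (hc : c ∈ Cp ce p) (hc' : c ∈ Cp ce p') : ∀ v, v ∈ p → ¬ v ∈ p' := by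
  intro v hv hv'
  rw [Cp, Finset.mem_image] at hc hc'
  obtain ⟨i, _, hi⟩ := hc
  obtain ⟨j, _, hj⟩ := hc'
  rw [PS, Finset.mem_filter] at hp hp'
  exact h2 p p' i j hp.2 hp'.2 (by simp [hne]) ⟨v, hv, hv'⟩ (hi.trans hj.symm)


set_option synthInstance.maxSize 2000 in
set_option maxHeartbeats 1000000 in
lemma no_three_disjoint : ∀ p q r : Sym2 (Fin 4), ¬p.IsDiag → ¬q.IsDiag → ¬r.IsDiag →
    p ≠ q → p ≠ r → q ≠ r → (∀ v, v ∈ p → ¬ v ∈ q) → (∀ v, v ∈ p → ¬ v ∈ r) →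
    (∀ v, v ∈ q → ¬ v ∈ r) → False := by decide

set_option synthInstance.maxSize 2000 in
set_option maxHeartbeats 1000000 in
lemma no_two_avoid : ∀ (p q : Sym2 (Fin 4)) (w : Fin 4), ¬p.IsDiag → ¬q.IsDiag → p ≠ q →
    ¬ w ∈ p → ¬ w ∈ q → (∀ v, v ∈ p → ¬ v ∈ q) → False := by decide

include h2 in
lemma hPc2 : ∀ c : Fin k, (Pc ce c).card ≤ 2 := by
  intro c
  by_contra hgt
  push_neg at hgt
  rw [Finset.two_lt_card] at hgt
  obtain ⟨p, hp, q, hq, r, hr, hpq, hpr, hqr⟩ := hgt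
  rw [Pc, Finset.mem_filter] at hp hq hr
  have dp : ¬p.IsDiag := by have := hp.1; rw [PS, Finset.mem_filter] at this; exact this.2
  have dq : ¬q.IsDiag := by have := hq.1; rw [PS, Finset.mem_filter] at this; exact this.2
  have dr : ¬r.IsDiag := by have := hr.1; rw [PS, Finset.mem_filter] at this; exact this.2
  exact no_three_disjoint p q r dp dq dr hpq hpr hqr
    (hdisj ce h2 hp.1 hq.1 hpq hp.2 hq.2) (hdisj ce h2 hp.1 hr.1 hpr hp.2 hr.2)
    (hdisj ce h2 hq.1 hr.1 hqr hq.2 hr.2)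

include h2 h3 in
lemma hPcw1 : ∀ w : Fin 4, (Pc ce (cv w)).card ≤ 1 := by
  intro w
  by_contra hgt
  push_neg at hgt
  rw [Finset.one_lt_card] at hgt
  obtain ⟨p, hp, q, hq, hpq⟩ := hgt
  rw [Pc, Finset.mem_filter] at hp hq
  have dp : ¬p.IsDiag := by have := hp.1; rw [PS, Finset.mem_filter] at this; exact this.2
  have dq : ¬q.IsDiag := by have := hq.1; rw [PS, Finset.mem_filter] at this; exact this.2
  have hwp : ¬ w ∈ p := hw_notin cv ce h3 (q := (p, w))
    (by rw [PW, Finset.mem_filter]; exact ⟨Finset.mem_product.mpr ⟨hp.1, Finset.mem_univ _⟩, hp.2⟩)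
  have hwq : ¬ w ∈ q := hw_notin cv ce h3 (q := (q, w))
    (by rw [PW, Finset.mem_filter]; exact ⟨Finset.mem_product.mpr ⟨hq.1, Finset.mem_univ _⟩, hq.2⟩)
  exact no_two_avoid p q w dp dq hpq hwp hwq (hdisj ce h2 hp.1 hq.1 hpq hp.2 hq.2)

lemma vert_pairs : ∀ v : Fin 4,
    (Finset.univ.filter (fun p : Sym2 (Fin 4) => ¬p.IsDiag ∧ v ∈ p)).card = 3 := by decide

include hlam hk h1 h2 h3 in
lemma hvert : ∀ v : Fin 4, ∃ q ∈ PW cv ce, v ∈ q.1 := by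
  intro v
  by_contra hno
  push_neg at hno
  -- the 3*lam edges at v have distinct colours, all outside VC
  set Dom : Finset (Sym2 (Fin 4) × Fin lam) :=
    (Finset.univ.filter (fun p : Sym2 (Fin 4) => ¬p.IsDiag ∧ v ∈ p)) ×ˢ Finset.univ with hDom
  have hDomcard : Dom.card = 3 * lam := by
    rw [hDom, Finset.card_product, vert_pairs v, Finset.card_univ, Fintype.card_fin]
  have hinj : Set.InjOn (fun x : Sym2 (Fin 4) × Fin lam => ce x.1 x.2) Dom := by
    intro x hx y hy hxy
    rw [hDom, Finset.mem_coe, Finset.mem_product, Finset.mem_filter] at hx hy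
    by_contra hne
    exact h2 x.1 y.1 x.2 y.2 hx.1.2.1 hy.1.2.1 (by simpa [Prod.ext_iff] using hne)
      ⟨v, hx.1.2.2, hy.1.2.2⟩ hxy
  have himage : ∀ x ∈ Dom, ce x.1 x.2 ∈ Finset.univ \ VC cv := by
    intro x hx
    rw [hDom, Finset.mem_product, Finset.mem_filter] at hx
    rw [Finset.mem_sdiff]
    refine ⟨Finset.mem_univ _, ?_⟩
    rw [VC, Finset.mem_image]
    rintro ⟨w, -, hw⟩
    have hxPS : x.1 ∈ PS := by rw [PS, Finset.mem_filter]; exact ⟨Finset.mem_univ _, hx.1.2.1⟩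
    by_cases hwv : w = v
    · exact h3 v x.1 x.2 hx.1.2.1 hx.1.2.2 (hwv ▸ hw)
    · exact hno (x.1, w) (by
        rw [PW, Finset.mem_filter]
        exact ⟨Finset.mem_product.mpr ⟨hxPS, Finset.mem_univ _⟩,
          by rw [Cp, Finset.mem_image]; exact ⟨x.2, Finset.mem_univ _, hw.symm⟩⟩) hx.1.2.2
  have hle : Dom.card ≤ (Finset.univ \ VC cv).card :=
    Finset.card_le_card_of_injOn _ himage hinj
  have hVCcard : (VC cv).card = 4 := by
    rw [VC, Finset.card_image_of_injective _ (hcv cv h1)]; simp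
  rw [Finset.card_sdiff_of_subset (Finset.subset_univ _), hVCcard, Finset.card_univ, Fintype.card_fin,
    hDomcard] at hle
  omega


def VI : Finset (Fin 4 × (Sym2 (Fin 4) × Fin 4)) :=
  (Finset.univ ×ˢ PW cv ce).filter (fun x => x.1 ∈ x.2.1)

lemma mem2 : ∀ p : Sym2 (Fin 4), ¬ p.IsDiag →
    (Finset.univ.filter (· ∈ p)).card = 2 := by decide

lemma hVIcard : (VI cv ce).card = 2 * (PW cv ce).card := by
  rw [VI, Finset.card_eq_sum_card_fiberwise (f := Prod.snd) (t := PW cv ce)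
    (fun x hx => (Finset.mem_product.mp (Finset.mem_filter.mp hx).1).2)]
  rw [Finset.sum_congr rfl (fun q hq => ?_), Finset.sum_const, smul_eq_mul, Nat.mul_comm]
  have he : ((Finset.univ ×ˢ PW cv ce).filter (fun x => x.1 ∈ x.2.1)).filter (fun x => x.2 = q)
      = (Finset.univ.filter (· ∈ q.1)).image (fun v => (v, q)) := by
    ext x
    simp only [Finset.mem_filter, Finset.mem_product, Finset.mem_image, Finset.mem_univ,
      true_and]
    constructor
    · rintro ⟨⟨-, hmem⟩, rfl⟩; exact ⟨x.1, hmem, rfl⟩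
    · rintro ⟨v, hv, rfl⟩; exact ⟨⟨hq, hv⟩, rfl⟩
  rw [he, Finset.card_image_of_injective _ (fun a b h => (Prod.ext_iff.mp h).1)]
  have hqPS : q.1 ∈ PS := (Finset.mem_product.mp (Finset.mem_filter.mp hq).1).1
  rw [PS, Finset.mem_filter] at hqPS
  exact mem2 q.1 hqPS.2


include h1 in
lemma hiota (h4 : ∀ (v : Fin 4) (e : Sym2 (Fin 4)) (i : Fin lam) (w : Fin 4)
      (f : Sym2 (Fin 4)) (j : Fin lam),
    ¬ e.IsDiag → ¬ f.IsDiag → v ∈ e → w ∈ f →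
    s(cv v, ce e i) = s(cv w, ce f j) → v = w ∧ e = f ∧ i = j) :
    ∀ x ∈ VI cv ce, ∀ y ∈ VI cv ce, s(x.1, x.2.2) = s(y.1, y.2.2) → x = y := by
  intro x hx y hy hxy
  rw [VI, Finset.mem_filter, Finset.mem_product] at hx hy
  obtain ⟨⟨-, hxPW⟩, hxmem⟩ := hx
  obtain ⟨⟨-, hyPW⟩, hymem⟩ := hy
  have hxPS := (Finset.mem_product.mp (Finset.mem_filter.mp hxPW).1).1
  have hyPS := (Finset.mem_product.mp (Finset.mem_filter.mp hyPW).1).1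
  have hxc := (Finset.mem_filter.mp hxPW).2
  have hyc := (Finset.mem_filter.mp hyPW).2
  rw [Cp, Finset.mem_image] at hxc hyc
  obtain ⟨i, -, hi⟩ := hxc
  obtain ⟨j, -, hj⟩ := hyc
  rw [PS, Finset.mem_filter] at hxPS hyPS
  have key : s(cv x.1, ce x.2.1 i) = s(cv y.1, ce y.2.1 j) := by
    rw [hi, hj]
    have := congrArg (Sym2.map cv) hxy
    simpa [Sym2.map_pair_eq] using this
  obtain ⟨hv, he, hij⟩ := h4 x.1 x.2.1 i y.1 y.2.1 j hxPS.2 hyPS.2 hxmem hymem key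
  have hw : x.2.2 = y.2.2 := hcv cv h1 (by rw [← hi, ← hj, he, hij])
  exact Prod.ext hv (Prod.ext he hw)


lemma offdiag_card : (Finset.univ.filter (fun p : Sym2 (Fin 4) => ¬ p.IsDiag)).card = 6 := by
  decide

include h1 h3 in
lemma hVI6 (h4 : ∀ (v : Fin 4) (e : Sym2 (Fin 4)) (i : Fin lam) (w : Fin 4)
      (f : Sym2 (Fin 4)) (j : Fin lam),
    ¬ e.IsDiag → ¬ f.IsDiag → v ∈ e → w ∈ f →
    s(cv v, ce e i) = s(cv w, ce f j) → v = w ∧ e = f ∧ i = j) :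
    (VI cv ce).card ≤ 6 := by
  rw [← offdiag_card]
  apply Finset.card_le_card_of_injOn (fun x => s(x.1, x.2.2))
  · intro x hx
    rw [Finset.mem_coe, Finset.mem_filter]
    refine ⟨Finset.mem_univ _, ?_⟩
    rw [Sym2.mk_isDiag_iff]
    rw [VI, Finset.mem_coe, Finset.mem_filter] at hx
    intro hvw
    exact hw_notin cv ce h3 (Finset.mem_product.mp hx.1).2 (hvw ▸ hx.2)
  · intro x hx y hy
    exact hiota cv ce h1 h4 x hx y hy

include hlam hk h1 h2 h3 in
lemma hVI4 : 4 ≤ (VI cv ce).card := by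
  have hchoice : ∀ v : Fin 4, ∃ q ∈ PW cv ce, v ∈ q.1 := hvert cv ce hlam hk h1 h2 h3
  choose Q hQ hQmem using hchoice
  have h : (Finset.univ : Finset (Fin 4)).card ≤ (VI cv ce).card := by
    apply Finset.card_le_card_of_injOn (fun v => (v, Q v))
    · intro v _
      rw [VI, Finset.mem_coe, Finset.mem_filter, Finset.mem_product]
      exact ⟨⟨Finset.mem_univ _, hQ v⟩, hQmem v⟩
    · intro a _ b _ h
      exact (Prod.ext_iff.mp h).1
  simpa using h


set_option synthInstance.maxSize 2000 in
set_option maxHeartbeats 1000000 in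
lemma case2 : ∀ (a1 b1 a2 b2 w1 w2 : Fin 4), a1 ≠ b1 → a2 ≠ b2 →
    ¬ w1 ∈ s(a1,b1) → ¬ w2 ∈ s(a2,b2) → (s(a1,b1) ≠ s(a2,b2) ∨ w1 ≠ w2) →
    (∀ v : Fin 4, v ∈ s(a1,b1) ∨ v ∈ s(a2,b2)) →
    ∃ v1 v2 : Fin 4, v1 ∈ s(a1,b1) ∧ v2 ∈ s(a2,b2) ∧ s(v1, w1) = s(v2, w2) := by decide

include hlam hk h1 h2 h3 in
lemma casePW2 (h4 : ∀ (v : Fin 4) (e : Sym2 (Fin 4)) (i : Fin lam) (w : Fin 4)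
      (f : Sym2 (Fin 4)) (j : Fin lam),
    ¬ e.IsDiag → ¬ f.IsDiag → v ∈ e → w ∈ f →
    s(cv v, ce e i) = s(cv w, ce f j) → v = w ∧ e = f ∧ i = j)
    (hcard : (PW cv ce).card = 2) : False := by
  obtain ⟨q1, q2, hq12, hPWeq⟩ := Finset.card_eq_two.mp hcard
  have hq1 : q1 ∈ PW cv ce := by rw [hPWeq]; simp
  have hq2 : q2 ∈ PW cv ce := by rw [hPWeq]; simp
  have hd1 : ¬ q1.1.IsDiag := by
    have := (Finset.mem_product.mp (Finset.mem_filter.mp hq1).1).1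
    rw [PS, Finset.mem_filter] at this; exact this.2
  have hd2 : ¬ q2.1.IsDiag := by
    have := (Finset.mem_product.mp (Finset.mem_filter.mp hq2).1).1
    rw [PS, Finset.mem_filter] at this; exact this.2
  obtain ⟨a1, b1, he1⟩ := sym2_rep q1.1
  obtain ⟨a2, b2, he2⟩ := sym2_rep q2.1
  rw [he1, Sym2.mk_isDiag_iff] at hd1
  rw [he2, Sym2.mk_isDiag_iff] at hd2
  have hw1 : ¬ q1.2 ∈ s(a1,b1) := he1 ▸ hw_notin cv ce h3 hq1
  have hw2 : ¬ q2.2 ∈ s(a2,b2) := he2 ▸ hw_notin cv ce h3 hq2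
  have hne : s(a1,b1) ≠ s(a2,b2) ∨ q1.2 ≠ q2.2 := by
    by_contra hcon
    push_neg at hcon
    exact hq12 (Prod.ext (he1.trans (hcon.1.trans he2.symm)) hcon.2)
  have hcover : ∀ v : Fin 4, v ∈ s(a1,b1) ∨ v ∈ s(a2,b2) := by
    intro v
    obtain ⟨q, hq, hmem⟩ := hvert cv ce hlam hk h1 h2 h3 v
    rw [hPWeq, Finset.mem_insert, Finset.mem_singleton] at hq
    rcases hq with rfl | rfl
    · exact Or.inl (he1 ▸ hmem)
    · exact Or.inr (he2 ▸ hmem)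
  obtain ⟨v1, v2, hv1, hv2, hcol⟩ := case2 a1 b1 a2 b2 q1.2 q2.2 hd1 hd2 hw1 hw2 hne hcover
  have hx1 : (v1, q1) ∈ VI cv ce := by
    rw [VI, Finset.mem_filter, Finset.mem_product]
    exact ⟨⟨Finset.mem_univ _, hq1⟩, he1 ▸ hv1⟩
  have hx2 : (v2, q2) ∈ VI cv ce := by
    rw [VI, Finset.mem_filter, Finset.mem_product]
    exact ⟨⟨Finset.mem_univ _, hq2⟩, he2 ▸ hv2⟩
  have := hiota cv ce h1 h4 (v1, q1) hx1 (v2, q2) hx2 hcol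
  exact hq12 (congrArg Prod.snd this)


def Mset : Finset (Fin k) := (Finset.univ \ VC cv).filter (fun c => (Pc ce c).card = 2)
def Dset : Finset (Fin k) := (Finset.univ \ VC cv).filter (fun c => ¬ (Pc ce c).card = 2)

include h2 in
lemma split {p : Sym2 (Fin 4)} (hp : p ∈ PS) :
    lam = (Cp ce p ∩ VC cv).card + (Cp ce p ∩ Mset cv ce).card
      + (Cp ce p ∩ Dset cv ce).card := by
  have h0 : (Cp ce p).card = lam := hCp ce h2 hp
  have ha : (Cp ce p ∩ VC cv).card + (Cp ce p \ VC cv).card = (Cp ce p).card :=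
    Finset.card_inter_add_card_sdiff _ _
  have hb : ((Cp ce p \ VC cv).filter (fun c => (Pc ce c).card = 2)).card
      + ((Cp ce p \ VC cv).filter (fun c => ¬ (Pc ce c).card = 2)).card
      = (Cp ce p \ VC cv).card := Finset.card_filter_add_card_filter_not _
  have e1 : (Cp ce p \ VC cv).filter (fun c => (Pc ce c).card = 2) = Cp ce p ∩ Mset cv ce := by
    ext c
    simp only [Mset, Finset.mem_filter, Finset.mem_sdiff, Finset.mem_inter, Finset.mem_univ,
      true_and]
    tauto
  have e2 : (Cp ce p \ VC cv).filter (fun c => ¬ (Pc ce c).card = 2)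
      = Cp ce p ∩ Dset cv ce := by
    ext c
    simp only [Dset, Finset.mem_filter, Finset.mem_sdiff, Finset.mem_inter, Finset.mem_univ,
      true_and]
    tauto
  rw [e1, e2] at hb
  omega

include h2 in
lemma total6 : ∑ c : Fin k, (Pc ce c).card = 6 * lam := by
  have step1 : ∑ c : Fin k, (Pc ce c).card
      = ∑ c : Fin k, ∑ p ∈ PS, (if c ∈ Cp ce p then 1 else 0) := by
    refine Finset.sum_congr rfl fun c _ => ?_
    exact Finset.card_filter _ _
  rw [step1, Finset.sum_comm]
  have step2 : ∀ p ∈ PS, (∑ c : Fin k, if c ∈ Cp ce p then 1 else 0) = lam := by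
    intro p hp
    rw [← Finset.card_filter, Finset.filter_univ_mem]
    exact hCp ce h2 hp
  rw [Finset.sum_congr rfl step2, Finset.sum_const, smul_eq_mul]
  have : (PS : Finset (Sym2 (Fin 4))).card = 6 := offdiag_card
  rw [this]

include h1 in
lemma sumVC : ∑ c ∈ VC cv, (Pc ce c).card = (PW cv ce).card := by
  rw [VC, Finset.sum_image (fun x _ y _ h => hcv cv h1 h)]
  have step : ∀ w : Fin 4, (Pc ce (cv w)).card
      = ((PW cv ce).filter (fun q => q.2 = w)).card := by
    intro w
    have e : (PW cv ce).filter (fun q => q.2 = w)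
        = (Pc ce (cv w)).image (fun p => (p, w)) := by
      ext ⟨p, w'⟩
      simp only [PW, Pc, Finset.mem_filter, Finset.mem_product, Finset.mem_image,
        Finset.mem_univ, and_true, true_and, Prod.mk.injEq]
      constructor
      · rintro ⟨⟨hps, hc⟩, rfl⟩
        exact ⟨p, ⟨hps, hc⟩, rfl, rfl⟩
      · rintro ⟨p', ⟨hps, hc⟩, rfl, rfl⟩
        exact ⟨⟨hps, hc⟩, rfl⟩
    rw [e, Finset.card_image_of_injective _ (fun a b h => (Prod.ext_iff.mp h).1)]
  rw [Finset.sum_congr rfl (fun w _ => step w)]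
  exact (Finset.card_eq_sum_card_fiberwise
    (f := Prod.snd) (t := Finset.univ) (fun x _ => Finset.mem_univ _)).symm

lemma sumM : ∑ c ∈ Mset cv ce, (Pc ce c).card = 2 * (Mset cv ce).card := by
  calc ∑ c ∈ Mset cv ce, (Pc ce c).card = ∑ _c ∈ Mset cv ce, 2 :=
        Finset.sum_congr rfl (fun c hc => (Finset.mem_filter.mp hc).2)
  _ = 2 * (Mset cv ce).card := by rw [Finset.sum_const, smul_eq_mul, Nat.mul_comm]

include h2 in
lemma sumD : ∑ c ∈ Dset cv ce, (Pc ce c).card ≤ (Dset cv ce).card := by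
  have : ∀ c ∈ Dset cv ce, (Pc ce c).card ≤ 1 := by
    intro c hc
    have := hPc2 ce h2 c
    have h2c := (Finset.mem_filter.mp hc).2
    omega
  calc ∑ c ∈ Dset cv ce, (Pc ce c).card ≤ ∑ _c ∈ Dset cv ce, 1 := Finset.sum_le_sum this
  _ = (Dset cv ce).card := by simp

include h1 in
lemma MDcard : (Mset cv ce).card + (Dset cv ce).card = k - 4 := by
  have := Finset.card_filter_add_card_filter_not
    (s := Finset.univ \ VC cv) (p := fun c => (Pc ce c).card = 2)
  have hVCcard : (VC cv).card = 4 := by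
    rw [VC, Finset.card_image_of_injective _ (hcv cv h1)]; simp
  rw [Finset.card_sdiff_of_subset (Finset.subset_univ _), hVCcard, Finset.card_univ,
    Fintype.card_fin] at this
  exact this


set_option synthInstance.maxSize 2000 in
set_option maxHeartbeats 1000000 in
lemma unique_compl : ∀ x r p : Sym2 (Fin 4), ¬x.IsDiag → ¬r.IsDiag → ¬p.IsDiag →
    (∀ v, v ∈ x → ¬ v ∈ p) → (∀ v, v ∈ r ↔ ¬ v ∈ p) → x = r := by decide

set_option synthInstance.maxSize 2000 in
set_option maxHeartbeats 1000000 in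
lemma exists_compl : ∀ p : Sym2 (Fin 4), ¬p.IsDiag →
    ∃ r : Sym2 (Fin 4), ¬ r.IsDiag ∧ ∀ v, v ∈ r ↔ ¬ v ∈ p := by decide

set_option synthInstance.maxSize 2000 in
set_option maxHeartbeats 1000000 in
lemma compl_inj : ∀ p p' r : Sym2 (Fin 4), ¬p.IsDiag → ¬p'.IsDiag → ¬r.IsDiag →
    (∀ v, v ∈ r ↔ ¬ v ∈ p) → (∀ v, v ∈ r ↔ ¬ v ∈ p') → p = p' := by decide

include h2 in
lemma hMeq_half {p r : Sym2 (Fin 4)} (hp : p ∈ PS) (hr : r ∈ PS)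
    (hcompl : ∀ v, v ∈ r ↔ ¬ v ∈ p) :
    ∀ c ∈ Cp ce p ∩ Mset cv ce, c ∈ Cp ce r := by
  intro c hc
  rw [Finset.mem_inter] at hc
  obtain ⟨hcp, hcM⟩ := hc
  have hcard : (Pc ce c).card = 2 := (Finset.mem_filter.mp hcM).2
  obtain ⟨x, y, hxy, hPceq⟩ := Finset.card_eq_two.mp hcard
  have hpPc : p ∈ Pc ce c := by rw [Pc, Finset.mem_filter]; exact ⟨hp, hcp⟩
  have hdp : ¬ p.IsDiag := (Finset.mem_filter.mp hp).2
  have hdr : ¬ r.IsDiag := (Finset.mem_filter.mp hr).2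
  rw [hPceq, Finset.mem_insert, Finset.mem_singleton] at hpPc
  have key : ∀ o : Sym2 (Fin 4), o ∈ Pc ce c → o ≠ p → c ∈ Cp ce r := by
    intro o ho hop
    rw [Pc, Finset.mem_filter] at ho
    have hdo : ¬ o.IsDiag := (Finset.mem_filter.mp ho.1).2
    have hdisj' : ∀ v, v ∈ o → ¬ v ∈ p := hdisj ce h2 ho.1 hp hop ho.2 hcp
    have : o = r := unique_compl o r p hdo hdr hdp hdisj' hcompl
    exact this ▸ ho.2
  rcases hpPc with rfl | rfl
  · refine key y ?_ (fun hyx => hxy hyx.symm)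
    rw [hPceq]; simp
  · refine key x ?_ (fun hxy' => hxy hxy')
    rw [hPceq]; simp

include h2 in
lemma hMeq {p r : Sym2 (Fin 4)} (hp : p ∈ PS) (hr : r ∈ PS)
    (hcompl : ∀ v, v ∈ r ↔ ¬ v ∈ p) :
    Cp ce p ∩ Mset cv ce = Cp ce r ∩ Mset cv ce := by
  have hcompl' : ∀ v, v ∈ p ↔ ¬ v ∈ r := by
    intro v
    rw [hcompl v]
    exact (not_not.symm : (v ∈ p) ↔ ¬¬ (v ∈ p))
  apply Finset.Subset.antisymm
  · intro c hc
    rw [Finset.mem_inter]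
    exact ⟨hMeq_half cv ce h2 hp hr hcompl c hc, (Finset.mem_inter.mp hc).2⟩
  · intro c hc
    rw [Finset.mem_inter]
    exact ⟨hMeq_half cv ce h2 hr hp hcompl' c hc, (Finset.mem_inter.mp hc).2⟩


include hlam hk h1 h2 h3 in
lemma casePW3 (h4 : ∀ (v : Fin 4) (e : Sym2 (Fin 4)) (i : Fin lam) (w : Fin 4)
      (f : Sym2 (Fin 4)) (j : Fin lam),
    ¬ e.IsDiag → ¬ f.IsDiag → v ∈ e → w ∈ f →
    s(cv v, ce e i) = s(cv w, ce f j) → v = w ∧ e = f ∧ i = j)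
    (hcard : (PW cv ce).card = 3) : False := by
  obtain ⟨q1, q2, q3, h12, h13, h23, hPWeq⟩ := Finset.card_eq_three.mp hcard
  have hq1 : q1 ∈ PW cv ce := by rw [hPWeq]; simp
  have hq2 : q2 ∈ PW cv ce := by rw [hPWeq]; simp
  have hq3 : q3 ∈ PW cv ce := by rw [hPWeq]; simp
  have hmemPS : ∀ q ∈ PW cv ce, q.1 ∈ PS := fun q hq =>
    (Finset.mem_product.mp (Finset.mem_filter.mp hq).1).1
  have hq1PS := hmemPS q1 hq1
  have hq2PS := hmemPS q2 hq2
  have hq3PS := hmemPS q3 hq3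
  have hd1 : ¬ q1.1.IsDiag := (Finset.mem_filter.mp hq1PS).2
  have hd2 : ¬ q2.1.IsDiag := (Finset.mem_filter.mp hq2PS).2
  have hd3 : ¬ q3.1.IsDiag := (Finset.mem_filter.mp hq3PS).2
  obtain ⟨t1, ht1⟩ := exists_idx q1.1 hd1
  obtain ⟨t2, ht2⟩ := exists_idx q2.1 hd2
  obtain ⟨t3, ht3⟩ := exists_idx q3.1 hd3
  have hw1 : ¬ q1.2 ∈ q1.1 := hw_notin cv ce h3 hq1
  have hw2 : ¬ q2.2 ∈ q2.1 := hw_notin cv ce h3 hq2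
  have hw3 : ¬ q3.2 ∈ q3.1 := hw_notin cv ce h3 hq3
  have hm1 : ¬ mem4 q1.2 (pA t1) (pB t1) := fun h => hw1 (ht1 ▸ (mem4_iff _ _ _).mp h)
  have hm2 : ¬ mem4 q2.2 (pA t2) (pB t2) := fun h => hw2 (ht2 ▸ (mem4_iff _ _ _).mp h)
  have hm3 : ¬ mem4 q3.2 (pA t3) (pB t3) := fun h => hw3 (ht3 ▸ (mem4_iff _ _ _).mp h)
  have hne12 : t1 ≠ t2 ∨ q1.2 ≠ q2.2 := by
    by_contra hcon; push_neg at hcon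
    exact h12 (Prod.ext (by rw [ht1, ht2, hcon.1]) hcon.2)
  have hne13 : t1 ≠ t3 ∨ q1.2 ≠ q3.2 := by
    by_contra hcon; push_neg at hcon
    exact h13 (Prod.ext (by rw [ht1, ht3, hcon.1]) hcon.2)
  have hne23 : t2 ≠ t3 ∨ q2.2 ≠ q3.2 := by
    by_contra hcon; push_neg at hcon
    exact h23 (Prod.ext (by rw [ht2, ht3, hcon.1]) hcon.2)
  have hcov : ∀ v : Fin 4, mem4 v (pA t1) (pB t1) ∨ mem4 v (pA t2) (pB t2)
      ∨ mem4 v (pA t3) (pB t3) := by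
    intro v
    obtain ⟨q, hq, hmem⟩ := hvert cv ce hlam hk h1 h2 h3 v
    rw [hPWeq] at hq
    simp only [Finset.mem_insert, Finset.mem_singleton] at hq
    rcases hq with rfl | rfl | rfl
    · exact Or.inl ((mem4_iff _ _ _).mpr (ht1 ▸ hmem))
    · exact Or.inr (Or.inl ((mem4_iff _ _ _).mpr (ht2 ▸ hmem)))
    · exact Or.inr (Or.inr ((mem4_iff _ _ _).mpr (ht3 ▸ hmem)))
  have collide : ∀ qa qb : Sym2 (Fin 4) × Fin 4, qa ∈ PW cv ce → qb ∈ PW cv ce →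
      ∀ u u' : Fin 4, u ∈ qa.1 → u' ∈ qb.1 → s(u, qa.2) = s(u', qb.2) → qa = qb := by
    intro qa qb hqa hqb u u' hu hu' hs
    have := hiota cv ce h1 h4 (u, qa)
      (by rw [VI, Finset.mem_filter, Finset.mem_product]
          exact ⟨⟨Finset.mem_univ _, hqa⟩, hu⟩) (u', qb)
      (by rw [VI, Finset.mem_filter, Finset.mem_product]
          exact ⟨⟨Finset.mem_univ _, hqb⟩, hu'⟩) hs
    exact congrArg Prod.snd this
  rcases case3 t1 t2 t3 q1.2 q2.2 q3.2 hm1 hm2 hm3 hne12 hne13 hne23 hcov with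
    ⟨v, v', hcol⟩ | ⟨m, hma, hmb, hmc, ht12, ht13, ht23⟩
  · rcases hcol with ⟨ha, hb, hs⟩ | ⟨ha, hb, hs⟩ | ⟨ha, hb, hs⟩
    · exact h12 (collide q1 q2 hq1 hq2 v v' (ht1 ▸ (mem4_iff _ _ _).mp ha)
        (ht2 ▸ (mem4_iff _ _ _).mp hb) ((seq4_iff _ _ _ _).mp hs))
    · exact h13 (collide q1 q3 hq1 hq3 v v' (ht1 ▸ (mem4_iff _ _ _).mp ha)
        (ht3 ▸ (mem4_iff _ _ _).mp hb) ((seq4_iff _ _ _ _).mp hs))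
    · exact h23 (collide q2 q3 hq2 hq3 v v' (ht2 ▸ (mem4_iff _ _ _).mp ha)
        (ht3 ▸ (mem4_iff _ _ _).mp hb) ((seq4_iff _ _ _ _).mp hs))
  · -- the counting branch
    have hm1' : m ∈ q1.1 := ht1 ▸ (mem4_iff _ _ _).mp hma
    have hm2' : m ∈ q2.1 := ht2 ▸ (mem4_iff _ _ _).mp hmb
    have hm3' : m ∈ q3.1 := ht3 ▸ (mem4_iff _ _ _).mp hmc
    have hp12 : q1.1 ≠ q2.1 := fun h => ht12 (idx_inj t1 t2 (by rw [← ht1, ← ht2, h]))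
    have hp13 : q1.1 ≠ q3.1 := fun h => ht13 (idx_inj t1 t3 (by rw [← ht1, ← ht3, h]))
    have hp23 : q2.1 ≠ q3.1 := fun h => ht23 (idx_inj t2 t3 (by rw [← ht2, ← ht3, h]))
    obtain ⟨r1, hdr1, hcompl1⟩ := exists_compl q1.1 hd1
    obtain ⟨r2, hdr2, hcompl2⟩ := exists_compl q2.1 hd2
    obtain ⟨r3, hdr3, hcompl3⟩ := exists_compl q3.1 hd3
    have hr1PS : r1 ∈ PS := Finset.mem_filter.mpr ⟨Finset.mem_univ _, hdr1⟩
    have hr2PS : r2 ∈ PS := Finset.mem_filter.mpr ⟨Finset.mem_univ _, hdr2⟩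
    have hr3PS : r3 ∈ PS := Finset.mem_filter.mpr ⟨Finset.mem_univ _, hdr3⟩
    -- vertex-colour part of each p_j is exactly one colour
    have hVCp : ∀ qq : Sym2 (Fin 4) × Fin 4, qq ∈ PW cv ce →
        (∀ q' ∈ PW cv ce, q'.1 = qq.1 → q' = qq) →
        Cp ce qq.1 ∩ VC cv = {cv qq.2} := by
      intro qq hqq huniq
      apply Finset.Subset.antisymm
      · intro c hc
        rw [Finset.mem_inter] at hc
        obtain ⟨hcp, hcv'⟩ := hc
        rw [VC, Finset.mem_image] at hcv'
        obtain ⟨w, -, rfl⟩ := hcv'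
        have hPWmem : (qq.1, w) ∈ PW cv ce := Finset.mem_filter.mpr
          ⟨Finset.mem_product.mpr ⟨hmemPS qq hqq, Finset.mem_univ _⟩, hcp⟩
        have heq := huniq (qq.1, w) hPWmem rfl
        rw [Finset.mem_singleton]
        exact congrArg cv (congrArg Prod.snd heq)
      · rw [Finset.singleton_subset_iff, Finset.mem_inter]
        refine ⟨(Finset.mem_filter.mp hqq).2, ?_⟩
        rw [VC, Finset.mem_image]
        exact ⟨qq.2, Finset.mem_univ _, rfl⟩
    have huniq1 : ∀ q' ∈ PW cv ce, q'.1 = q1.1 → q' = q1 := by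
      intro q' hq' he
      rw [hPWeq] at hq'
      simp only [Finset.mem_insert, Finset.mem_singleton] at hq'
      rcases hq' with rfl | rfl | rfl
      · rfl
      · exact absurd he hp12.symm
      · exact absurd he hp13.symm
    have huniq2 : ∀ q' ∈ PW cv ce, q'.1 = q2.1 → q' = q2 := by
      intro q' hq' he
      rw [hPWeq] at hq'
      simp only [Finset.mem_insert, Finset.mem_singleton] at hq'
      rcases hq' with rfl | rfl | rfl
      · exact absurd he hp12
      · rfl
      · exact absurd he hp23.symm
    have huniq3 : ∀ q' ∈ PW cv ce, q'.1 = q3.1 → q' = q3 := by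
      intro q' hq' he
      rw [hPWeq] at hq'
      simp only [Finset.mem_insert, Finset.mem_singleton] at hq'
      rcases hq' with rfl | rfl | rfl
      · exact absurd he hp13
      · exact absurd he hp23
      · rfl
    have hn1 : (Cp ce q1.1 ∩ VC cv).card = 1 := by
      rw [hVCp q1 hq1 huniq1]; exact Finset.card_singleton _
    have hn2 : (Cp ce q2.1 ∩ VC cv).card = 1 := by
      rw [hVCp q2 hq2 huniq2]; exact Finset.card_singleton _
    have hn3 : (Cp ce q3.1 ∩ VC cv).card = 1 := by
      rw [hVCp q3 hq3 huniq3]; exact Finset.card_singleton _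
    -- vertex-colour part of each r_j is empty
    have hVCr : ∀ rr : Sym2 (Fin 4), rr ∈ PS → ¬ m ∈ rr → (Cp ce rr ∩ VC cv).card = 0 := by
      intro rr hrr hmr
      rw [Finset.card_eq_zero, Finset.eq_empty_iff_forall_notMem]
      intro c hc
      rw [Finset.mem_inter] at hc
      obtain ⟨hcp, hcv'⟩ := hc
      rw [VC, Finset.mem_image] at hcv'
      obtain ⟨w, -, rfl⟩ := hcv'
      have hPWmem : (rr, w) ∈ PW cv ce := Finset.mem_filter.mpr
        ⟨Finset.mem_product.mpr ⟨hrr, Finset.mem_univ _⟩, hcp⟩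
      rw [hPWeq] at hPWmem
      simp only [Finset.mem_insert, Finset.mem_singleton] at hPWmem
      rcases hPWmem with heq | heq | heq
      · have he' : rr = q1.1 := congrArg Prod.fst heq
        rw [he'] at hmr; exact hmr hm1'
      · have he' : rr = q2.1 := congrArg Prod.fst heq
        rw [he'] at hmr; exact hmr hm2'
      · have he' : rr = q3.1 := congrArg Prod.fst heq
        rw [he'] at hmr; exact hmr hm3'
    have hmr1 : ¬ m ∈ r1 := fun h => (hcompl1 m).mp h hm1'
    have hmr2 : ¬ m ∈ r2 := fun h => (hcompl2 m).mp h hm2'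
    have hmr3 : ¬ m ∈ r3 := fun h => (hcompl3 m).mp h hm3'
    -- split equations and D-colour extraction
    have hsq1 := split cv ce h2 hq1PS
    have hsq2 := split cv ce h2 hq2PS
    have hsq3 := split cv ce h2 hq3PS
    have hsr1 := split cv ce h2 hr1PS
    have hsr2 := split cv ce h2 hr2PS
    have hsr3 := split cv ce h2 hr3PS
    have hM1 : (Cp ce q1.1 ∩ Mset cv ce).card = (Cp ce r1 ∩ Mset cv ce).card := by
      rw [hMeq cv ce h2 hq1PS hr1PS hcompl1]
    have hM2 : (Cp ce q2.1 ∩ Mset cv ce).card = (Cp ce r2 ∩ Mset cv ce).card := by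
      rw [hMeq cv ce h2 hq2PS hr2PS hcompl2]
    have hM3 : (Cp ce q3.1 ∩ Mset cv ce).card = (Cp ce r3 ∩ Mset cv ce).card := by
      rw [hMeq cv ce h2 hq3PS hr3PS hcompl3]
    have hVCr1 := hVCr r1 hr1PS hmr1
    have hVCr2 := hVCr r2 hr2PS hmr2
    have hVCr3 := hVCr r3 hr3PS hmr3
    have hD1 : 0 < (Cp ce r1 ∩ Dset cv ce).card := by omega
    have hD2 : 0 < (Cp ce r2 ∩ Dset cv ce).card := by omega
    have hD3 : 0 < (Cp ce r3 ∩ Dset cv ce).card := by omega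
    obtain ⟨c1, hc1⟩ := Finset.card_pos.mp hD1
    obtain ⟨c2, hc2⟩ := Finset.card_pos.mp hD2
    obtain ⟨c3, hc3⟩ := Finset.card_pos.mp hD3
    -- r's are pairwise distinct
    have hr12 : r1 ≠ r2 := fun h =>
      hp12 (compl_inj q1.1 q2.1 r1 hd1 hd2 hdr1 hcompl1 (h ▸ hcompl2))
    have hr13 : r1 ≠ r3 := fun h =>
      hp13 (compl_inj q1.1 q3.1 r1 hd1 hd3 hdr1 hcompl1 (h ▸ hcompl3))
    have hr23 : r2 ≠ r3 := fun h =>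
      hp23 (compl_inj q2.1 q3.1 r2 hd2 hd3 hdr2 hcompl2 (h ▸ hcompl3))
    -- c's are pairwise distinct
    have hPcmem : ∀ (c : Fin k) (rr : Sym2 (Fin 4)), rr ∈ PS →
        c ∈ Cp ce rr ∩ Dset cv ce → rr ∈ Pc ce c := by
      intro c rr hrr hc
      exact Finset.mem_filter.mpr ⟨hrr, (Finset.mem_inter.mp hc).1⟩
    have hcD : ∀ (c : Fin k) (rr : Sym2 (Fin 4)), c ∈ Cp ce rr ∩ Dset cv ce →
        ¬ (Pc ce c).card = 2 := by
      intro c rr hc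
      exact (Finset.mem_filter.mp (Finset.mem_inter.mp hc).2).2
    have hcdist : ∀ (c : Fin k) (ra rb : Sym2 (Fin 4)), ra ∈ PS → rb ∈ PS → ra ≠ rb →
        c ∈ Cp ce ra ∩ Dset cv ce → c ∈ Cp ce rb ∩ Dset cv ce → False := by
      intro c ra rb hra hrb hne hca hcb
      have : 1 < (Pc ce c).card :=
        Finset.one_lt_card.mpr ⟨ra, hPcmem c ra hra hca, rb, hPcmem c rb hrb hcb, hne⟩
      have := hPc2 ce h2 c
      have := hcD c ra hca
      omega
    have hcne12 : c1 ≠ c2 := fun h => hcdist c1 r1 r2 hr1PS hr2PS hr12 hc1 (h ▸ hc2)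
    have hcne13 : c1 ≠ c3 := fun h => hcdist c1 r1 r3 hr1PS hr3PS hr13 hc1 (h ▸ hc3)
    have hcne23 : c2 ≠ c3 := fun h => hcdist c2 r2 r3 hr2PS hr3PS hr23 hc2 (h ▸ hc3)
    -- lower bound for the D-sum
    have hsub : ({c1, c2, c3} : Finset (Fin k)) ⊆ Dset cv ce := by
      intro c hc
      simp only [Finset.mem_insert, Finset.mem_singleton] at hc
      rcases hc with rfl | rfl | rfl
      · exact (Finset.mem_inter.mp hc1).2
      · exact (Finset.mem_inter.mp hc2).2
      · exact (Finset.mem_inter.mp hc3).2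
    have hone : ∀ c ∈ ({c1, c2, c3} : Finset (Fin k)), 1 ≤ (Pc ce c).card := by
      intro c hc
      simp only [Finset.mem_insert, Finset.mem_singleton] at hc
      rcases hc with rfl | rfl | rfl
      · exact Finset.card_pos.mpr ⟨r1, hPcmem c r1 hr1PS hc1⟩
      · exact Finset.card_pos.mpr ⟨r2, hPcmem c r2 hr2PS hc2⟩
      · exact Finset.card_pos.mpr ⟨r3, hPcmem c r3 hr3PS hc3⟩
    have htriple : ({c1, c2, c3} : Finset (Fin k)).card = 3 := by
      rw [Finset.card_insert_of_notMem (by simp [hcne12, hcne13]),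
        Finset.card_insert_of_notMem (by simp [hcne23]), Finset.card_singleton]
    have hlow : 3 ≤ ∑ c ∈ Dset cv ce, (Pc ce c).card := by
      calc (3 : ℕ) = ∑ _c ∈ ({c1, c2, c3} : Finset (Fin k)), 1 := by
            rw [Finset.sum_const, smul_eq_mul, htriple]
      _ ≤ ∑ c ∈ ({c1, c2, c3} : Finset (Fin k)), (Pc ce c).card := Finset.sum_le_sum hone
      _ ≤ ∑ c ∈ Dset cv ce, (Pc ce c).card :=
            Finset.sum_le_sum_of_subset hsub
    -- global counting
    have hT := total6 ce h2
    have hsdiff : ∑ c ∈ Finset.univ \ VC cv, (Pc ce c).card + ∑ c ∈ VC cv, (Pc ce c).card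
        = ∑ c : Fin k, (Pc ce c).card := Finset.sum_sdiff (Finset.subset_univ _)
    have hMD : ∑ c ∈ Mset cv ce, (Pc ce c).card + ∑ c ∈ Dset cv ce, (Pc ce c).card
        = ∑ c ∈ Finset.univ \ VC cv, (Pc ce c).card := by
      rw [Mset, Dset]
      exact Finset.sum_filter_add_sum_filter_not _ _ _
    have hVCsum := sumVC cv ce h1
    rw [hcard] at hVCsum
    have hMsum := sumM cv ce
    have hDsum := sumD cv ce h2
    have hMDcard := MDcard cv ce h1
    have hk4' := hk4 cv h1
    omega


include hlam hk h1 h2 h3 in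
lemma lower_bound_contradiction
    (h4 : ∀ (v : Fin 4) (e : Sym2 (Fin 4)) (i : Fin lam) (w : Fin 4)
      (f : Sym2 (Fin 4)) (j : Fin lam),
    ¬ e.IsDiag → ¬ f.IsDiag → v ∈ e → w ∈ f →
    s(cv v, ce e i) = s(cv w, ce f j) → v = w ∧ e = f ∧ i = j) : False := by
  have h6 := hVI6 cv ce h1 h3 h4
  have h4' := hVI4 cv ce hlam hk h1 h2 h3
  have hcardVI := hVIcard cv ce
  have hPWcase : (PW cv ce).card = 2 ∨ (PW cv ce).card = 3 := by omega
  rcases hPWcase with h | h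
  · exact casePW2 cv ce hlam hk h1 h2 h3 h4 h
  · exact casePW3 cv ce hlam hk h1 h2 h3 h4 h

end LB

lemma xor_lt4 : ∀ a b : Fin 4, a.val ^^^ b.val < 4 := by decide

lemma xor_bounds : ∀ a b : Fin 4, a ≠ b → 1 ≤ a.val ^^^ b.val ∧ a.val ^^^ b.val ≤ 3 := by decide

lemma xor_pair : ∀ a b c d v : Fin 4, a ≠ b → c ≠ d → a.val ^^^ b.val = c.val ^^^ d.val →
    v ∈ s(a,b) → v ∈ s(c,d) → s(a,b) = s(c,d) := by decide

lemma ub (lam : ℕ) (hlam : 1 ≤ lam) :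
    ∃ cv ce, IsHarmoniousTotalColoringM 4 lam (3*lam+4) cv ce := by
  refine ⟨fun v => ⟨v.val, by omega⟩,
    fun e i => Sym2.lift ⟨fun a b => ⟨3 + (a.val ^^^ b.val) + 3 * i.val, by
      have := xor_lt4 a b; omega⟩, fun a b => by simp [Nat.xor_comm]⟩ e, ?_, ?_, ?_, ?_⟩
  · intro u v huv h
    exact huv (Fin.ext (by simpa using congrArg Fin.val h))
  · intro e f i j hde hdf hne hshare hcc
    obtain ⟨a, b, rfl⟩ := sym2_rep e
    obtain ⟨c, d, rfl⟩ := sym2_rep f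
    rw [Sym2.mk_isDiag_iff] at hde hdf
    obtain ⟨v, hv1, hv2⟩ := hshare
    simp only [Sym2.lift_mk] at hcc
    have hval := congrArg Fin.val hcc
    simp only at hval
    have h1 := xor_bounds a b hde
    have h2 := xor_bounds c d hdf
    have hxor : a.val ^^^ b.val = c.val ^^^ d.val := by omega
    have hij : i.val = j.val := by omega
    exact hne (by rw [xor_pair a b c d v hde hdf hxor hv1 hv2, Fin.ext hij])
  · intro v e i hde hv h
    obtain ⟨a, b, rfl⟩ := sym2_rep e
    rw [Sym2.mk_isDiag_iff] at hde
    have h1 := xor_bounds a b hde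
    have hval := congrArg Fin.val h
    simp only [Sym2.lift_mk] at hval
    have : v.val < 4 := v.isLt
    omega
  · intro v e i w f j hde hdf hv hw heq
    rw [Sym2.eq_iff] at heq
    obtain ⟨a, b, rfl⟩ := sym2_rep e
    obtain ⟨c, d, rfl⟩ := sym2_rep f
    rw [Sym2.mk_isDiag_iff] at hde hdf
    have h1 := xor_bounds a b hde
    have h2 := xor_bounds c d hdf
    rcases heq with ⟨hA, hB⟩ | ⟨hA, hB⟩
    · have hvw : v = w := Fin.ext (by simpa using congrArg Fin.val hA)
      subst hvw
      have hval := congrArg Fin.val hB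
      simp only [Sym2.lift_mk] at hval
      have hxor : a.val ^^^ b.val = c.val ^^^ d.val := by omega
      have hij : i.val = j.val := by omega
      exact ⟨rfl, xor_pair a b c d v hde hdf hxor hv hw, Fin.ext hij⟩
    · exfalso
      have hval := congrArg Fin.val hA
      simp only [Sym2.lift_mk] at hval
      have : v.val < 4 := v.isLt
      omega


/-- For every `λ ≥ 1`, `h_t(λK_4) = 3λ + 4`. -/
theorem ht_multigraph_K4 (lam : ℕ) (hlam : 1 ≤ lam) :
    harmoniousTotalChromaticNumberM 4 lam = 3 * lam + 4 := by
  have hmem : (3 * lam + 4) ∈ {k | ∃ cv ce, IsHarmoniousTotalColoringM 4 lam k cv ce} :=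
    ub lam hlam
  apply le_antisymm
  · exact Nat.sInf_le hmem
  · apply le_csInf ⟨_, hmem⟩
    intro b hb
    by_contra hlt
    push_neg at hlt
    obtain ⟨cv, ce, h1, h2, h3, h4⟩ := hb
    exact lower_bound_contradiction cv ce hlam (by omega) h1 h2 h3 h4
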